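/- Let Ω be a finite set, let ω ∈ Ω, let G and G' be transitive subgroups of Sym(Ω), and suppose there is a group isomorphism φ : G → G' with φ(G_ω) = G'_ω, where G_ω and G'_ω are the stabilizers of ω. Then there exists σ ∈ Sym(Ω) with σ(ω) = ω and G' = σ⁻¹ G σ. -/

import Mathlib

/-- If `G` and `G'` are transitive subgroups of `Sym(Ω)` and some group isomorphism
`G → G'` carries the stabilizer of `ω` in `G` onto the stabilizer of `ω` in `G'`,
then `G` and `G'` are conjugate by a permutation fixing `ω`: there is `σ ∈ Sym(Ω)`
with `σ ω = ω` and `G' = σ⁻¹ G σ`. -/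
theorem transitive_subgroups_iso_with_stabilizers_are_conjugate
    {Ω : Type*} [Fintype Ω] (ω : Ω) (G G' : Subgroup (Equiv.Perm Ω))
    (hG : ∀ a b : Ω, ∃ g ∈ G, g a = b) (hG' : ∀ a b : Ω, ∃ g ∈ G', g a = b)
    (φ : ↥G ≃* ↥G')
    (hφ : Subgroup.map φ.toMonoidHom
        ((G ⊓ MulAction.stabilizer (Equiv.Perm Ω) ω).subgroupOf G) =
      (G' ⊓ MulAction.stabilizer (Equiv.Perm Ω) ω).subgroupOf G') :
    ∃ σ : Equiv.Perm Ω, σ ω = ω ∧ ∀ g : Equiv.Perm Ω, g ∈ G' ↔ σ * g * σ⁻¹ ∈ G := by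
  classical
  -- stabilizer correspondence
  have hstab : ∀ x : ↥G', ((φ.symm x : Equiv.Perm Ω) ω = ω ↔ (x : Equiv.Perm Ω) ω = ω) := by
    intro x
    have h1 : x ∈ (G' ⊓ MulAction.stabilizer (Equiv.Perm Ω) ω).subgroupOf G' ↔
        φ.symm x ∈ (G ⊓ MulAction.stabilizer (Equiv.Perm Ω) ω).subgroupOf G := by
      rw [← hφ, Subgroup.mem_map_equiv]
    simpa [Subgroup.mem_subgroupOf, Subgroup.mem_inf, MulAction.mem_stabilizer_iff,
      Equiv.Perm.smul_def, (φ.symm x).2, x.2] using h1.symm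
  -- choose transitivity witnesses
  choose k hk1 hk2 using fun α => hG' ω α
  choose m hm1 hm2 using fun α => hG ω α
  set f : Ω → Ω := fun α => (φ.symm ⟨k α, hk1 α⟩ : Equiv.Perm Ω) ω with hf
  set f' : Ω → Ω := fun α => (φ ⟨m α, hm1 α⟩ : Equiv.Perm Ω) ω with hf'
  -- key lemma A: f α only depends on α
  have keyA : ∀ (g' : ↥G') (α : Ω), (g' : Equiv.Perm Ω) ω = α →
      f α = (φ.symm g' : Equiv.Perm Ω) ω := by
    intro g' α hα
    have hu : ((⟨k α, hk1 α⟩⁻¹ * g' : ↥G') : Equiv.Perm Ω) ω = ω := by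
      simp only [Subgroup.coe_mul, Equiv.Perm.mul_apply, hα, InvMemClass.coe_inv]
      rw [Equiv.Perm.inv_def, Equiv.symm_apply_eq]; exact (hk2 α).symm
    have := (hstab _).mpr hu
    simp only [map_mul, map_inv, Subgroup.coe_mul, InvMemClass.coe_inv,
      Equiv.Perm.mul_apply] at this
    have h2 : (φ.symm g' : Equiv.Perm Ω) ω = (φ.symm ⟨k α, hk1 α⟩ : Equiv.Perm Ω) ω := by
      have := congrArg (φ.symm ⟨k α, hk1 α⟩ : Equiv.Perm Ω) this
      simpa using this
    exact h2.symm
  have keyB : ∀ (g : ↥G) (α : Ω), (g : Equiv.Perm Ω) ω = α →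
      f' α = (φ g : Equiv.Perm Ω) ω := by
    intro g α hα
    have hu : ((⟨m α, hm1 α⟩⁻¹ * g : ↥G) : Equiv.Perm Ω) ω = ω := by
      simp only [Subgroup.coe_mul, Equiv.Perm.mul_apply, hα, InvMemClass.coe_inv]
      rw [Equiv.Perm.inv_def, Equiv.symm_apply_eq]; exact (hm2 α).symm
    have hu' : ((φ (⟨m α, hm1 α⟩⁻¹ * g) : Equiv.Perm Ω)) ω = ω := by
      have : (φ.symm (φ (⟨m α, hm1 α⟩⁻¹ * g)) : Equiv.Perm Ω) ω = ω := by
        simpa using hu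
      exact (hstab _).mp this
    simp only [map_mul, map_inv, Subgroup.coe_mul, InvMemClass.coe_inv,
      Equiv.Perm.mul_apply] at hu' ⊢
    have h2 : (φ g : Equiv.Perm Ω) ω = (φ ⟨m α, hm1 α⟩ : Equiv.Perm Ω) ω := by
      have := congrArg (φ ⟨m α, hm1 α⟩ : Equiv.Perm Ω) hu'
      simpa using this
    exact h2.symm
  -- f' ∘ f = id and f ∘ f' = id
  have hff' : ∀ α, f' (f α) = α := by
    intro α
    have := keyB (φ.symm ⟨k α, hk1 α⟩) (f α) rfl
    rw [this]; simp [hk2 α]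
  have hf'f : ∀ α, f (f' α) = α := by
    intro α
    have := keyA (φ ⟨m α, hm1 α⟩) (f' α) rfl
    rw [this]; simp [hm2 α]
  set σ : Equiv.Perm Ω := ⟨f, f', fun α => hff' α, fun α => hf'f α⟩ with hσ
  refine ⟨σ, ?_, ?_⟩
  · show f ω = ω
    have := keyA 1 ω (by simp)
    rw [this]; simp
  · -- equivariance: f (g' α) = φ.symm g' (f α) for g' ∈ G'
    have equivA : ∀ (g' : ↥G') (α : Ω), f ((g' : Equiv.Perm Ω) α) =
        (φ.symm g' : Equiv.Perm Ω) (f α) := by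
      intro g' α
      have h1 : ((g' * ⟨k α, hk1 α⟩ : ↥G') : Equiv.Perm Ω) ω = (g' : Equiv.Perm Ω) α := by
        simp [hk2 α]
      have := keyA _ _ h1
      rw [this]; simp [map_mul]; rfl
    have equivB : ∀ (g : ↥G) (α : Ω), f' ((g : Equiv.Perm Ω) α) =
        (φ g : Equiv.Perm Ω) (f' α) := by
      intro g α
      have h1 : ((g * ⟨m α, hm1 α⟩ : ↥G) : Equiv.Perm Ω) ω = (g : Equiv.Perm Ω) α := by
        simp [hm2 α]
      have := keyB _ _ h1
      rw [this]; simp [map_mul]; rfl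
    intro g
    constructor
    · intro hg
      have : σ * g * σ⁻¹ = (φ.symm ⟨g, hg⟩ : Equiv.Perm Ω) := by
        ext α
        have : (σ * g * σ⁻¹) α = f (g (f' α)) := rfl
        rw [this, equivA ⟨g, hg⟩ (f' α), hf'f α]
      rw [this]; exact (φ.symm ⟨g, hg⟩).2
    · intro hg
      have h3 : g = σ⁻¹ * (σ * g * σ⁻¹) * σ := by group
      have h4 : σ⁻¹ * (σ * g * σ⁻¹) * σ = (φ ⟨σ * g * σ⁻¹, hg⟩ : Equiv.Perm Ω) := by
        ext α
        have : (σ⁻¹ * (σ * g * σ⁻¹) * σ) α = f' ((σ * g * σ⁻¹) (f α)) := rfl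
        rw [this, equivB ⟨σ * g * σ⁻¹, hg⟩ (f α), hff' α]
      rw [h3, h4]; exact (φ ⟨σ * g * σ⁻¹, hg⟩).2
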